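/- Every graph G of order at least two with at least m(|V(G)|-1) edges contains an m-tree-connected subgraph with at least two vertices. -/

import Mathlib

open SimpleGraph

def IsTreeConn {V : Type*} (m : ℕ) (G : SimpleGraph V) : Prop :=
  ∃ T : Fin m → SimpleGraph V, (∀ i, T i ≤ G) ∧ (∀ i, (T i).IsTree) ∧
    ∀ i j, i ≠ j → Disjoint (T i).edgeSet (T j).edgeSet

noncomputable def eIn {V : Type*} (G : SimpleGraph V) (S : Set V) : ℕ :=
  {e ∈ G.edgeSet | ∀ v ∈ e, v ∈ S}.ncard

def IsSparse {V : Type*} (m : ℕ) (G : SimpleGraph V) : Prop :=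
  ∀ S : Set V, S.Nonempty → (eIn G S : ℤ) ≤ m * S.ncard - m

def mComp {V : Type*} (m : ℕ) (G : SimpleGraph V) (v : V) : Set V :=
  ⋃₀ {X : Set V | v ∈ X ∧ IsTreeConn m (G.induce X)}

noncomputable def crossE {V : Type*} (m : ℕ) (G : SimpleGraph V) : ℕ :=
  {e ∈ G.edgeSet | ∃ u ∈ e, ∃ w ∈ e, mComp m G u ≠ mComp m G w}.ncard

noncomputable def Omega {V : Type*} (m : ℕ) (G : SimpleGraph V) : ℤ :=
  m * (Set.range (mComp m G)).ncard - crossE m G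

namespace TCaux

variable {V : Type*}

/-- If every adjacency of `H` yields reachability in `H'`, then `H`-reachability
implies `H'`-reachability. -/
lemma reach_hom {H H' : SimpleGraph V} (h : ∀ a b, H.Adj a b → H'.Reachable a b)
    {x y : V} (hr : H.Reachable x y) : H'.Reachable x y := by
  obtain ⟨w⟩ := hr
  induction w with
  | nil => exact Reachable.refl _
  | cons h' _ ih => exact (h _ _ h').trans ih

/-- In a forest, removing an edge of a path between `u` and `v` disconnects `u` from `v`. -/
lemma unreach {F : SimpleGraph V} (hF : F.IsAcyclic) {u v : V} (p : F.Walk u v)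
    (hp : p.IsPath) {f : Sym2 V} (hf : f ∈ p.edges) :
    ¬ (F \ fromEdgeSet {f}).Reachable u v := by
  classical
  rintro ⟨w⟩
  have hsub : ∀ e ∈ w.edges, e ∈ F.edgeSet := by
    intro e he
    have := w.edges_subset_edgeSet he
    rw [edgeSet_sdiff, edgeSet_fromEdgeSet] at this
    exact this.1
  set w' := w.transfer F hsub with hw'
  have huniq := (isAcyclic_iff_path_unique.mp hF) ⟨p, hp⟩ w'.toPath
  have hfq : f ∈ (w'.toPath : F.Walk u v).edges := by
    rw [← huniq]; exact hf
  have hfw : f ∈ w'.edges := Walk.edges_toPath_subset w' hfq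
  rw [hw', Walk.edges_transfer] at hfw
  have h2 := w.edges_subset_edgeSet hfw
  rw [edgeSet_sdiff, edgeSet_fromEdgeSet] at h2
  exact h2.2 ⟨rfl, F.not_isDiag_of_mem_edgeSet h2.1⟩

/-- Decompose a duplicate-free walk at an edge. -/
lemma edge_decomp {H : SimpleGraph V} {x y : V} (w : H.Walk x y) {f : Sym2 V}
    (hf : f ∈ w.edges) (hn : w.edges.Nodup) :
    ∃ (c d : V), s(c, d) = f ∧ ∃ (w1 : H.Walk x c) (w2 : H.Walk d y),
      f ∉ w1.edges ∧ f ∉ w2.edges := by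
  induction w with
  | nil => simp at hf
  | @cons a b y h q ih =>
    rw [Walk.edges_cons] at hf hn
    rcases List.mem_cons.mp hf with h1 | h2
    · exact ⟨a, b, h1.symm, Walk.nil, q, by simp, by
        rw [h1]; exact (List.nodup_cons.mp hn).1⟩
    · obtain ⟨c, d, hcd, w1, w2, hw1, hw2⟩ := ih h2 (List.nodup_cons.mp hn).2
      refine ⟨c, d, hcd, Walk.cons h w1, w2, ?_, hw2⟩
      rw [Walk.edges_cons]
      intro h3
      rcases List.mem_cons.mp h3 with h4 | h4
      · exact (List.nodup_cons.mp hn).1 (h4 ▸ h2)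
      · exact hw1 h4

/-- Adding an edge between two non-connected vertices of a forest keeps it a forest. -/
lemma acyclic_add_cross {F : SimpleGraph V} (hF : F.IsAcyclic) {u v : V}
    (h : ¬ F.Reachable u v) : (F ⊔ fromEdgeSet {s(u, v)}).IsAcyclic := by
  intro a c hc
  by_cases he : s(u, v) ∈ c.edges
  · have hne : u ≠ v := fun h' => h (h' ▸ Reachable.refl _)
    have := (adj_and_reachable_delete_edges_iff_exists_cycle
      (G := F ⊔ fromEdgeSet {s(u, v)}) (v := u) (w := v)).mpr ⟨a, c, hc, he⟩
    refine h (reach_hom (H := (F ⊔ fromEdgeSet {s(u,v)}) \ fromEdgeSet {s(u,v)}) ?_ this.2)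
    intro a b hab
    obtain ⟨hab1, hab2⟩ := hab
    rcases hab1 with h1 | h1
    · exact h1.reachable
    · rw [fromEdgeSet_adj] at h1
      exact absurd (by simp [fromEdgeSet_adj, h1.1, h1.2]) hab2
  · have hsub : ∀ e ∈ c.edges, e ∈ F.edgeSet := by
      intro e hec
      have := c.edges_subset_edgeSet hec
      rw [edgeSet_sup, edgeSet_fromEdgeSet] at this
      rcases this with h1 | h1
      · exact h1
      · simp only [Set.mem_diff, Set.mem_singleton_iff] at h1
        exact absurd (h1.1 ▸ hec) he
    exact hF (c.transfer F hsub) (hc.transfer hsub)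

/-- In a forest, the edges of the (unique) path are contained in the edges of any walk
with the same endpoints. -/
lemma path_edges_subset_walk {F : SimpleGraph V} (hF : F.IsAcyclic) {u v : V}
    (p : F.Walk u v) (hp : p.IsPath) (w : F.Walk u v) : ∀ g ∈ p.edges, g ∈ w.edges := by
  classical
  intro g hg
  have huniq := (isAcyclic_iff_path_unique.mp hF) ⟨p, hp⟩ w.toPath
  have : g ∈ (w.toPath : F.Walk u v).edges := by rw [← huniq]; exact hg
  exact Walk.edges_toPath_subset w this

section Exchange

variable {F : SimpleGraph V} {u v : V} {f : Sym2 V}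

/-- Edge set of the exchanged graph. -/
lemma exch_edgeSet (hF : ∀ e ∈ F.edgeSet, ¬ e.IsDiag) (hne : u ≠ v) :
    (fromEdgeSet (insert s(u, v) F.edgeSet \ {f})).edgeSet
      = insert s(u, v) F.edgeSet \ {f} := by
  rw [edgeSet_fromEdgeSet]
  ext e
  constructor
  · exact fun h => h.1
  · intro h
    refine ⟨h, ?_⟩
    intro h3
    rcases h.1 with h1 | h1
    · subst h1
      exact hne (Sym2.isDiag_iff_proj_eq.mp h3)
    · exact hF _ h1 h3

lemma exch_acyclic (hF : F.IsAcyclic) (hdiag : ∀ e ∈ F.edgeSet, ¬ e.IsDiag)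
    (hne : u ≠ v) (he : s(u, v) ∉ F.edgeSet)
    (p : F.Walk u v) (hp : p.IsPath) (hf : f ∈ p.edges) :
    (fromEdgeSet (insert s(u, v) F.edgeSet \ {f})).IsAcyclic := by
  set F2 := fromEdgeSet (insert s(u, v) F.edgeSet \ {f}) with hF2
  have hES : F2.edgeSet = insert s(u, v) F.edgeSet \ {f} := exch_edgeSet hdiag hne
  have hfF : f ∈ F.edgeSet := p.edges_subset_edgeSet hf
  have hef : s(u, v) ≠ f := fun hh => he (hh ▸ hfF)
  intro a c hc
  by_cases hec : s(u, v) ∈ c.edges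
  · have h2 := (adj_and_reachable_delete_edges_iff_exists_cycle (G := F2)).mpr ⟨a, c, hc, hec⟩
    apply unreach hF p hp hf
    have hle : F2 \ fromEdgeSet {s(u, v)} ≤ F \ fromEdgeSet {f} := by
      intro x y hxy
      rw [sdiff_adj] at hxy ⊢
      obtain ⟨h1, h2'⟩ := hxy
      have hmem : s(x, y) ∈ F2.edgeSet := h1
      rw [hES] at hmem
      have hxe : s(x, y) ≠ s(u, v) := by
        intro hh
        exact h2' (by rw [fromEdgeSet_adj]; exact ⟨by rw [hh]; rfl, h1.ne⟩)
      have hmF : s(x, y) ∈ F.edgeSet := by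
        rcases hmem.1 with h3 | h3
        · exact absurd h3 hxe
        · exact h3
      refine ⟨hmF, ?_⟩
      rw [fromEdgeSet_adj]
      rintro ⟨h3, -⟩
      exact hmem.2 h3
    exact h2.2.mono hle
  · have hsub : ∀ e ∈ c.edges, e ∈ F.edgeSet := by
      intro e hce
      have := c.edges_subset_edgeSet hce
      rw [hES] at this
      rcases this.1 with h3 | h3
      · exact absurd (h3 ▸ hce) hec
      · exact h3
    exact hF (c.transfer F hsub) (hc.transfer hsub)

lemma exch_reach (hF : F.IsAcyclic) (hdiag : ∀ e ∈ F.edgeSet, ¬ e.IsDiag)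
    (hne : u ≠ v) (he : s(u, v) ∉ F.edgeSet)
    (p : F.Walk u v) (hp : p.IsPath) (hf : f ∈ p.edges) (x y : V) :
    (fromEdgeSet (insert s(u, v) F.edgeSet \ {f})).Reachable x y ↔ F.Reachable x y := by
  set F2 := fromEdgeSet (insert s(u, v) F.edgeSet \ {f}) with hF2
  have hES : F2.edgeSet = insert s(u, v) F.edgeSet \ {f} := exch_edgeSet hdiag hne
  have hfF : f ∈ F.edgeSet := p.edges_subset_edgeSet hf
  have hef : s(u, v) ≠ f := fun hh => he (hh ▸ hfF)
  constructor
  · refine reach_hom (fun a b hab => ?_)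
    have hmem : s(a, b) ∈ F2.edgeSet := hab
    rw [hES] at hmem
    rcases hmem.1 with h3 | h3
    · rcases Sym2.eq_iff.mp h3 with ⟨rfl, rfl⟩ | ⟨rfl, rfl⟩
      · exact ⟨p⟩
      · exact Reachable.symm ⟨p⟩
    · exact Adj.reachable h3
  · refine reach_hom (fun a b hab => ?_)
    by_cases hbf : s(a, b) = f
    · obtain ⟨c, d, hcd, w1, w2, hw1, hw2⟩ := edge_decomp p hf hp.edges_nodup
      have htr : ∀ {r t : V} (w : F.Walk r t), f ∉ w.edges → F2.Reachable r t := by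
        intro r t w hwf
        refine ⟨w.transfer F2 (fun e hew => ?_)⟩
        rw [hES]
        exact ⟨Set.mem_insert_of_mem _ (w.edges_subset_edgeSet hew),
          fun hh => hwf (hh ▸ hew)⟩
      have huv : F2.Reachable u v := by
        refine Adj.reachable ?_
        have : s(u, v) ∈ F2.edgeSet := by
          rw [hES]; exact ⟨Set.mem_insert _ _, hef⟩
        exact this
      have hcd2 : F2.Reachable c d :=
        (((htr w1 hw1).symm.trans huv).trans (htr w2 hw2).symm)
      have : s(a, b) = s(c, d) := by rw [hbf, hcd]
      rcases Sym2.eq_iff.mp this with ⟨rfl, rfl⟩ | ⟨rfl, rfl⟩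
      · exact hcd2
      · exact hcd2.symm
    · refine Adj.reachable ?_
      have : s(a, b) ∈ F2.edgeSet := by
        rw [hES]
        exact ⟨Set.mem_insert_of_mem _ hab, hbf⟩
      exact this

lemma exch_ncard (he : s(u, v) ∉ F.edgeSet) (hfF : f ∈ F.edgeSet)
    (hdiag : ∀ e ∈ F.edgeSet, ¬ e.IsDiag) (hne : u ≠ v) :
    (fromEdgeSet (insert s(u, v) F.edgeSet \ {f})).edgeSet.ncard = F.edgeSet.ncard := by
  rw [exch_edgeSet hdiag hne]
  exact Set.ncard_exchange' he hfF

end Exchange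

section Family

variable [Finite V] {m : ℕ}

/-- The union of the edge sets of a family. -/
def bigE (F : Fin m → SimpleGraph V) : Set (Sym2 V) := ⋃ i, (F i).edgeSet

/-- Total number of edges of a family. -/
noncomputable def wgt (F : Fin m → SimpleGraph V) : ℕ := ∑ i, (F i).edgeSet.ncard

/-- Admissible families: edge-disjoint spanning forests of `G`. -/
def Adm (G : SimpleGraph V) (F : Fin m → SimpleGraph V) : Prop :=
  (∀ i, F i ≤ G) ∧ (∀ i, (F i).IsAcyclic) ∧
    ∀ i j, i ≠ j → Disjoint (F i).edgeSet (F j).edgeSet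

lemma finite_simpleGraph : Finite (SimpleGraph V) :=
  Finite.of_injective (fun G => G.Adj) fun G H h => SimpleGraph.ext h

lemma bot_isAcyclic : (⊥ : SimpleGraph V).IsAcyclic := by
  intro v c hc
  cases c with
  | nil => exact hc.ne_nil rfl
  | cons h _ => exact h

lemma exists_max_adm (G : SimpleGraph V) :
    ∃ F : Fin m → SimpleGraph V, Adm G F ∧ ∀ F' : Fin m → SimpleGraph V, Adm G F' → wgt F' ≤ wgt F := by
  have : Finite (SimpleGraph V) := finite_simpleGraph
  have hadm : Adm G (fun _ : Fin m => (⊥ : SimpleGraph V)) :=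
    ⟨fun _ => bot_le, fun _ => bot_isAcyclic, fun i j _ => by simp⟩
  have hne : Nonempty {F : Fin m → SimpleGraph V // Adm G F} := ⟨⟨_, hadm⟩⟩
  obtain ⟨F, hF⟩ := Finite.exists_max (fun F : {F : Fin m → SimpleGraph V // Adm G F} => wgt F.1)
  exact ⟨F.1, F.2, fun F' hF' => hF ⟨F', hF'⟩⟩

lemma fromEdgeSet_le_of_subset {s : Set (Sym2 V)} {G : SimpleGraph V}
    (h : s ⊆ G.edgeSet) : fromEdgeSet s ≤ G := by
  conv_rhs => rw [← fromEdgeSet_edgeSet G]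
  exact fromEdgeSet_mono h

lemma edgeSet_fromEdgeSet_singleton {u v : V} (hne : u ≠ v) :
    (fromEdgeSet {s(u, v)}).edgeSet = {s(u, v)} := by
  rw [edgeSet_fromEdgeSet]
  ext e
  constructor
  · exact fun h => h.1
  · rintro h
    refine ⟨h, fun h3 => ?_⟩
    rw [Set.mem_singleton_iff] at h
    subst h
    exact hne (Sym2.isDiag_iff_proj_eq.mp h3)

/-- The exchange step relation on families. -/
def Stp (G : SimpleGraph V) (F F' : Fin m → SimpleGraph V) : Prop :=
  ∃ (i : Fin m) (u v : V) (p : (F i).Walk u v), p.IsPath ∧ s(u, v) ∈ G.edgeSet ∧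
    s(u, v) ∉ bigE F ∧ ∃ f ∈ p.edges,
      F' = Function.update F i (fromEdgeSet (insert s(u, v) (F i).edgeSet \ {f}))

variable {G : SimpleGraph V}

lemma mem_bigE {F : Fin m → SimpleGraph V} {e : Sym2 V} :
    e ∈ bigE F ↔ ∃ i, e ∈ (F i).edgeSet := Set.mem_iUnion

lemma stp_props {F F' : Fin m → SimpleGraph V} (hA : Adm G F) (h : Stp G F F') :
    Adm G F' ∧ wgt F' = wgt F ∧ ∀ i x y, ((F' i).Reachable x y ↔ (F i).Reachable x y) := by
  classical
  obtain ⟨i, u, v, p, hp, huvG, hbig, f, hf, rfl⟩ := h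
  have hne : u ≠ v := ((G.mem_edgeSet).mp huvG).ne
  have heF : s(u, v) ∉ (F i).edgeSet := fun hh => hbig (mem_bigE.mpr ⟨i, hh⟩)
  have hfF : f ∈ (F i).edgeSet := p.edges_subset_edgeSet hf
  have hdiag : ∀ e ∈ (F i).edgeSet, ¬ e.IsDiag := fun e he => (F i).not_isDiag_of_mem_edgeSet he
  set X := fromEdgeSet (insert s(u, v) (F i).edgeSet \ {f}) with hX
  have hesX : X.edgeSet = insert s(u, v) (F i).edgeSet \ {f} := exch_edgeSet hdiag hne
  have hXle : X ≤ G := by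
    apply fromEdgeSet_le_of_subset
    intro e he
    rcases he.1 with h1 | h1
    · exact h1 ▸ huvG
    · exact edgeSet_mono (hA.1 i) h1
  have hupd : ∀ j, Function.update F i X j = if j = i then X else F j := fun j =>
    Function.update_apply F i X j
  refine ⟨⟨?_, ?_, ?_⟩, ?_, ?_⟩
  · intro j
    rw [hupd]
    split_ifs with hj
    · exact hXle
    · exact hA.1 j
  · intro j
    rw [hupd]
    split_ifs with hj
    · exact exch_acyclic (hA.2.1 i) hdiag hne heF p hp hf
    · exact hA.2.1 j
  · intro j k hjk
    rw [hupd, hupd]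
    have key : ∀ k', k' ≠ i → Disjoint X.edgeSet ((F k').edgeSet) := by
      intro k' hk'
      rw [hesX, Set.disjoint_left]
      rintro e ⟨h1 | h1, h2⟩
      · subst h1
        exact fun hh => hbig (mem_bigE.mpr ⟨k', hh⟩)
      · exact fun hh => (hA.2.2 i k' (Ne.symm hk')).le_bot ⟨h1, hh⟩
    split_ifs with hj hk hk
    · exact absurd (hj.trans hk.symm) hjk
    · subst hj; exact key k (fun hh => hjk (hh ▸ rfl))
    · subst hk; exact (key j (fun hh => hjk (hh ▸ rfl))).symm
    · exact hA.2.2 j k hjk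
  · apply Finset.sum_congr rfl
    intro j _
    rw [hupd]
    split_ifs with hj
    · subst hj; exact exch_ncard heF hfF hdiag hne
    · rfl
  · intro j x y
    rw [hupd]
    split_ifs with hj
    · subst hj; exact exch_reach (hA.2.1 j) hdiag hne heF p hp hf x y
    · exact Iff.rfl

lemma stp_out_edge {F : Fin m → SimpleGraph V} (hA : Adm G F) {i : Fin m} {u v : V}
    {f : Sym2 V} (hne : u ≠ v) (hfF : f ∈ (F i).edgeSet) (he : s(u, v) ∉ (F i).edgeSet) :
    f ∉ bigE (Function.update F i (fromEdgeSet (insert s(u, v) (F i).edgeSet \ {f}))) := by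
  classical
  intro hmem
  obtain ⟨j, hj⟩ := mem_bigE.mp hmem
  rcases eq_or_ne j i with rfl | hji
  · rw [Function.update_self] at hj
    rw [exch_edgeSet (fun e he' => (F j).not_isDiag_of_mem_edgeSet he') hne] at hj
    exact hj.2 rfl
  · rw [Function.update_of_ne hji] at hj
    exact (hA.2.2 j i hji).le_bot ⟨hj, hfF⟩

lemma stp_symm {F F' : Fin m → SimpleGraph V} (hA : Adm G F) (h : Stp G F F') :
    Stp G F' F := by
  classical
  obtain ⟨i, u, v, p, hp, huvG, hbig, f, hf, rfl⟩ := h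
  have hne : u ≠ v := ((G.mem_edgeSet).mp huvG).ne
  have heF : s(u, v) ∉ (F i).edgeSet := fun hh => hbig (mem_bigE.mpr ⟨i, hh⟩)
  have hfF : f ∈ (F i).edgeSet := p.edges_subset_edgeSet hf
  have hdiag : ∀ e ∈ (F i).edgeSet, ¬ e.IsDiag := fun e he => (F i).not_isDiag_of_mem_edgeSet he
  have hef : s(u, v) ≠ f := fun hh => heF (hh ▸ hfF)
  set X := fromEdgeSet (insert s(u, v) (F i).edgeSet \ {f}) with hX
  have hesX : X.edgeSet = insert s(u, v) (F i).edgeSet \ {f} := exch_edgeSet hdiag hne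
  obtain ⟨a, b, rfl⟩ : ∃ a b, f = s(a, b) := Sym2.inductionOn f (fun x y => ⟨x, y, rfl⟩)
  have hab : (F i).Adj a b := ((F i).mem_edgeSet).mp hfF
  have habne : a ≠ b := hab.ne
  -- the updated family at index i is X
  have hupdi : Function.update F i X i = X := Function.update_self i X F
  -- f is not in the new union
  have hfout : s(a, b) ∉ bigE (Function.update F i X) := stp_out_edge hA hne hfF heF
  -- a path from a to b in X containing the new edge
  have hreachX : X.Reachable a b := by
    rw [exch_reach (hA.2.1 i) hdiag hne heF p hp hf a b]
    exact hab.reachable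
  obtain ⟨w⟩ := hreachX
  set q : X.Walk a b := w.bypass with hq
  have hqpath : q.IsPath := w.bypass_isPath
  have hqe : s(u, v) ∈ q.edges := by
    by_contra hq2
    have hsub : ∀ e ∈ q.edges, e ∈ ((F i) \ fromEdgeSet {s(a, b)}).edgeSet := by
      intro e heq
      have h1 := q.edges_subset_edgeSet heq
      rw [hesX] at h1
      have h2 : e ∈ (F i).edgeSet := by
        rcases h1.1 with h3 | h3
        · exact absurd (h3 ▸ heq) hq2
        · exact h3
      rw [edgeSet_sdiff, edgeSet_fromEdgeSet]
      exact ⟨h2, fun hh => h1.2 hh.1⟩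
    have : ((F i) \ fromEdgeSet {s(a, b)}).Reachable a b := ⟨q.transfer _ hsub⟩
    exact unreach (hA.2.1 i) (Walk.cons hab Walk.nil) (by simp [habne]) (by simp) this
  -- now build the reverse step
  have hsub' : ∀ e ∈ q.edges, e ∈ ((Function.update F i X) i).edgeSet := by
    rw [Function.update_self]
    exact q.edges_subset_edgeSet
  refine ⟨i, a, b, q.transfer _ hsub', hqpath.transfer hsub',
    edgeSet_mono (hA.1 i) hfF, hfout, s(u, v), ?_, ?_⟩
  · rw [Walk.edges_transfer]
    exact hqe
  · funext j
    rcases eq_or_ne j i with rfl | hji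
    · rw [Function.update_self, Function.update_self, hesX]
      have : insert s(a, b) (insert s(u, v) (F j).edgeSet \ {s(a, b)}) \ {s(u, v)}
          = (F j).edgeSet := by
        ext e
        simp only [Set.mem_diff, Set.mem_insert_iff, Set.mem_singleton_iff]
        constructor
        · rintro ⟨h1 | ⟨h1 | h1, h2⟩, h3⟩
          · subst h1; exact hfF
          · exact absurd h1 h3
          · exact h1
        · intro h1
          constructor
          · by_cases h2 : e = s(a, b)
            · exact Or.inl h2
            · exact Or.inr ⟨Or.inr h1, h2⟩
          · intro h2
            exact heF (h2 ▸ h1)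
      rw [this, fromEdgeSet_edgeSet]
    · rw [Function.update_of_ne hji, Function.update_of_ne hji]

/-- Reachable families from `F₀` by exchange steps. -/
def Reach (G : SimpleGraph V) (F₀ F : Fin m → SimpleGraph V) : Prop :=
  Relation.ReflTransGen (Stp G) F₀ F

lemma reach_props {F₀ F' : Fin m → SimpleGraph V} (hA : Adm G F₀) (hR : Reach G F₀ F') :
    Adm G F' ∧ wgt F' = wgt F₀ ∧ ∀ i x y, ((F' i).Reachable x y ↔ (F₀ i).Reachable x y) := by
  induction hR with
  | refl => exact ⟨hA, rfl, fun i x y => Iff.rfl⟩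
  | tail h1 hstep ih =>
    obtain ⟨hAc, hwc, hrc⟩ := ih
    obtain ⟨hAn, hwn, hrn⟩ := stp_props hAc hstep
    exact ⟨hAn, hwn.trans hwc, fun i x y => (hrn i x y).trans (hrc i x y)⟩

lemma reach_rev {F₀ Fx : Fin m → SimpleGraph V} (hA : Adm G F₀)
    (h : Relation.ReflTransGen (Stp G) F₀ Fx) :
    Relation.ReflTransGen (Stp G) Fx F₀ := by
  induction h with
  | refl => exact Relation.ReflTransGen.refl
  | tail h1 hstep ih =>
    exact Relation.ReflTransGen.head (stp_symm (reach_props hA h1).1 hstep) ih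

lemma max_reach_aux {F : Fin m → SimpleGraph V} (hA : Adm G F)
    (hmax : ∀ F' : Fin m → SimpleGraph V, Adm G F' → wgt F' ≤ wgt F)
    {u v : V} (huv : s(u, v) ∈ G.edgeSet) (hbig : s(u, v) ∉ bigE F) (i : Fin m) :
    (F i).Reachable u v := by
  classical
  by_contra hn
  have hne : u ≠ v := ((G.mem_edgeSet).mp huv).ne
  have heF : ∀ j, s(u, v) ∉ (F j).edgeSet := fun j hh => hbig (mem_bigE.mpr ⟨j, hh⟩)
  set X := (F i) ⊔ fromEdgeSet {s(u, v)} with hX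
  have hesX : X.edgeSet = insert s(u, v) (F i).edgeSet := by
    rw [hX, edgeSet_sup, edgeSet_fromEdgeSet_singleton hne]
    rw [Set.union_singleton]
  have hAdm : Adm G (Function.update F i X) := by
    have hupd : ∀ j, Function.update F i X j = if j = i then X else F j := fun j =>
      Function.update_apply F i X j
    refine ⟨?_, ?_, ?_⟩
    · intro j
      rw [hupd]; split_ifs with hj
      · exact sup_le (hA.1 i) (fromEdgeSet_le_of_subset (by simpa using huv))
      · exact hA.1 j
    · intro j
      rw [hupd]; split_ifs with hj
      · exact acyclic_add_cross (hA.2.1 i) hn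
      · exact hA.2.1 j
    · intro j k hjk
      rw [hupd, hupd]
      have key : ∀ k', k' ≠ i → Disjoint X.edgeSet ((F k').edgeSet) := by
        intro k' hk'
        rw [hesX, Set.disjoint_left]
        rintro e (h1 | h1)
        · subst h1; exact heF k'
        · exact fun hh => (hA.2.2 i k' (Ne.symm hk')).le_bot ⟨h1, hh⟩
      split_ifs with hj hk hk
      · exact absurd (hj.trans hk.symm) hjk
      · subst hj; exact key k (fun hh => hjk (hh ▸ rfl))
      · subst hk; exact (key j (fun hh => hjk (hh ▸ rfl))).symm
      · exact hA.2.2 j k hjk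
  have hwgt : wgt (Function.update F i X) = wgt F + 1 := by
    unfold wgt
    have : ∀ j : Fin m, (Function.update F i X j).edgeSet.ncard
        = (F j).edgeSet.ncard + (if j = i then 1 else 0) := by
      intro j
      rw [Function.update_apply]
      split_ifs with hj
      · subst hj
        rw [hesX, Set.ncard_insert_of_notMem (heF j) (Set.toFinite _)]
      · rfl
    rw [Finset.sum_congr rfl (fun j _ => this j), Finset.sum_add_distrib]
    simp
  have := hmax _ hAdm
  omega

variable (G) in
/-- The set of exchangeable edges. -/
def DD (F₀ : Fin m → SimpleGraph V) : Set (Sym2 V) :=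
  {e | e ∈ G.edgeSet ∧ ∃ F', Reach G F₀ F' ∧ e ∉ bigE F'}

lemma base_mem {F₀ F' : Fin m → SimpleGraph V} (hA : Adm G F₀) (hR : Reach G F₀ F')
    {u v : V} (huv : s(u, v) ∈ G.edgeSet) (hb : s(u, v) ∉ bigE F') (i : Fin m)
    (p : (F' i).Walk u v) (hp : p.IsPath) : ∀ f ∈ p.edges, f ∈ DD G F₀ := by
  classical
  intro f hf
  have hA' : Adm G F' := (reach_props hA hR).1
  have hne : u ≠ v := ((G.mem_edgeSet).mp huv).ne
  have hfF : f ∈ (F' i).edgeSet := p.edges_subset_edgeSet hf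
  have heF : s(u, v) ∉ (F' i).edgeSet := fun hh => hb (mem_bigE.mpr ⟨i, hh⟩)
  refine ⟨edgeSet_mono (hA'.1 i) hfF, Function.update F' i
    (fromEdgeSet (insert s(u, v) (F' i).edgeSet \ {f})), ?_, ?_⟩
  · exact hR.tail ⟨i, u, v, p, hp, huv, hb, f, hf, rfl⟩
  · exact stp_out_edge hA' hne hfF heF

/-- Walk surgery: replacing the edges of a walk by walks in another graph. -/
lemma walk_surgery {H H' : SimpleGraph V} {S : Set (Sym2 V)}
    (hrepl : ∀ c d, H.Adj c d → s(c, d) ∈ S →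
      ∃ w : H'.Walk c d, ∀ g ∈ w.edges, g ∈ S)
    {x y : V} (w : H.Walk x y) (hw : ∀ g ∈ w.edges, g ∈ S) :
    ∃ w' : H'.Walk x y, ∀ g ∈ w'.edges, g ∈ S := by
  induction w with
  | nil => exact ⟨Walk.nil, by simp⟩
  | cons h q ih =>
    obtain ⟨w1, hw1⟩ := hrepl _ _ h (hw _ (by simp))
    obtain ⟨w2, hw2⟩ := ih (fun g hg => hw _ (by simp [hg]))
    refine ⟨w1.append w2, fun g hg => ?_⟩
    rcases List.mem_append.mp ((Walk.edges_append w1 w2) ▸ hg) with h1 | h1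
    · exact hw1 _ h1
    · exact hw2 _ h1

/-- Claim C : along any reachable family, the unique forest paths between the ends of
an exchangeable edge consist of exchangeable edges. -/
lemma claimC {F₀ : Fin m → SimpleGraph V} (hA : Adm G F₀)
    (hmax : ∀ F'' : Fin m → SimpleGraph V, Adm G F'' → wgt F'' ≤ wgt F₀)
    {u v : V} (he : s(u, v) ∈ DD G F₀) {F' : Fin m → SimpleGraph V}
    (hR' : Reach G F₀ F') :
    ∀ (i : Fin m) (q : (F' i).Walk u v), q.IsPath → ∀ f ∈ q.edges, f ∈ DD G F₀ := by
  classical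
  obtain ⟨heG, Fw, hRw, hbw⟩ := he
  have hne : u ≠ v := ((G.mem_edgeSet).mp heG).ne
  -- `u` and `v` are connected in every index of every reachable family
  have hmaxw : ∀ F'' : Fin m → SimpleGraph V, Adm G F'' → wgt F'' ≤ wgt Fw := by
    intro F'' h''
    rw [(reach_props hA hRw).2.1]
    exact hmax F'' h''
  have hreach : ∀ (Fx : Fin m → SimpleGraph V), Reach G F₀ Fx → ∀ j, (Fx j).Reachable u v := by
    intro Fx hRx j
    rw [(reach_props hA hRx).2.2 j u v, ← (reach_props hA hRw).2.2 j u v]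
    exact max_reach_aux (reach_props hA hRw).1 hmaxw heG hbw j
  -- chain from the witness to `F'`
  have hchain : Relation.ReflTransGen (Stp G) Fw F' := (reach_rev hA hRw).trans hR'
  -- induction along the chain
  clear hR'
  induction hchain with
  | refl =>
    intro i q hq
    exact base_mem hA hRw heG hbw i q hq
  | @tail Fc Fn h1 hstep ih =>
    have hRc : Reach G F₀ Fc := hRw.trans h1
    have hRn : Reach G F₀ Fn := hRc.tail hstep
    have hAc : Adm G Fc := (reach_props hA hRc).1
    obtain ⟨l, x1, x2, ps, hps, hx12G, hxbig, b, hb, rfl⟩ := hstep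
    have hx12 : x1 ≠ x2 := ((G.mem_edgeSet).mp hx12G).ne
    have hbF : b ∈ (Fc l).edgeSet := ps.edges_subset_edgeSet hb
    have hxeF : s(x1, x2) ∉ (Fc l).edgeSet := fun hh => hxbig (mem_bigE.mpr ⟨l, hh⟩)
    have hdiag : ∀ e ∈ (Fc l).edgeSet, ¬ e.IsDiag :=
      fun e he' => (Fc l).not_isDiag_of_mem_edgeSet he'
    set X := fromEdgeSet (insert s(x1, x2) (Fc l).edgeSet \ {b}) with hX
    have hesX : X.edgeSet = insert s(x1, x2) (Fc l).edgeSet \ {b} := exch_edgeSet hdiag hx12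
    intro i q hq f hf
    rcases eq_or_ne i l with hil | hil
    · -- the modified index
      -- a path in `Fc l` from u to v
      obtain ⟨w0⟩ := hreach Fc hRc l
      have hP1 : ∀ g ∈ w0.bypass.edges, g ∈ DD G F₀ := ih l (w0.bypass) (w0.bypass_isPath)
      -- surgery to a walk in X
      have hXFn : (Function.update Fc l X) l = X := Function.update_self l X Fc
      have hrepl : ∀ c d, (Fc l).Adj c d → s(c, d) ∈ DD G F₀ →
          ∃ w : X.Walk c d, ∀ g ∈ w.edges, g ∈ DD G F₀ := by
        intro c d hcd hcdD
        by_cases hcb : s(c, d) = b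
        · -- replace b by a path in X between its ends
          have hreachX : X.Reachable c d := by
            rw [exch_reach (hAc.2.1 l) hdiag hx12 hxeF ps hps hb c d]
            exact hcd.reachable
          obtain ⟨wX⟩ := hreachX
          -- transfer to `Fn l` to apply base_mem
          have hsub : ∀ g ∈ wX.bypass.edges, g ∈ ((Function.update Fc l X) l).edgeSet := by
            rw [hXFn]
            exact fun g hg => wX.bypass.edges_subset_edgeSet hg
          have hbout : s(c, d) ∉ bigE (Function.update Fc l X) := by
            rw [hcb]
            exact stp_out_edge hAc hx12 hbF hxeF
          have hcdG : s(c, d) ∈ G.edgeSet := edgeSet_mono (hAc.1 l) hcd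
          have := base_mem hA hRn hcdG hbout l
            (wX.bypass.transfer _ hsub) (wX.bypass_isPath.transfer hsub)
          refine ⟨wX.bypass, fun g hg => ?_⟩
          refine this g ?_
          rw [Walk.edges_transfer]
          exact hg
        · -- the edge survives in X
          have : X.Adj c d := by
            rw [fromEdgeSet_adj]
            exact ⟨⟨Set.mem_insert_of_mem _ hcd, hcb⟩, hcd.ne⟩
          exact ⟨Walk.cons this Walk.nil, by
            intro g hg
            simp only [Walk.edges_cons, Walk.edges_nil, List.mem_singleton] at hg
            exact hg ▸ hcdD⟩
      obtain ⟨W, hW⟩ := walk_surgery hrepl w0.bypass hP1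
      -- transfer q to X
      have hqsub : ∀ g ∈ q.edges, g ∈ X.edgeSet := by
        intro g hg
        have := q.edges_subset_edgeSet hg
        rw [hil] at this
        rwa [hXFn] at this
      have hacX : X.IsAcyclic := exch_acyclic (hAc.2.1 l) hdiag hx12 hxeF ps hps hb
      have := path_edges_subset_walk hacX (q.transfer X hqsub) (hq.transfer hqsub) W f
        (by rw [Walk.edges_transfer]; exact hf)
      exact hW f this
    · -- untouched index
      have hqsub : ∀ g ∈ q.edges, g ∈ ((Fc i)).edgeSet := by
        intro g hg
        have := q.edges_subset_edgeSet hg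
        rwa [Function.update_of_ne hil] at this
      exact ih i (q.transfer _ hqsub) (hq.transfer hqsub) f
        (by rw [Walk.edges_transfer]; exact hf)

/-- Every forest extends to a spanning tree. -/
lemma exists_max_forest [Nonempty V] {F : SimpleGraph V} (hF : F.IsAcyclic) :
    ∃ K : SimpleGraph V, F ≤ K ∧ K.IsAcyclic ∧ K.Connected := by
  have : Finite (SimpleGraph V) := finite_simpleGraph
  have hne : Nonempty {K : SimpleGraph V // F ≤ K ∧ K.IsAcyclic} := ⟨⟨F, le_refl _, hF⟩⟩
  obtain ⟨K, hK⟩ := Finite.exists_max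
    (fun K : {K : SimpleGraph V // F ≤ K ∧ K.IsAcyclic} => K.1.edgeSet.ncard)
  refine ⟨K.1, K.2.1, K.2.2, ?_⟩
  rw [connected_iff]
  refine ⟨fun u v => ?_, inferInstance⟩
  by_contra hr
  have hne2 : u ≠ v := fun h => hr (h ▸ Reachable.refl u)
  set K' := K.1 ⊔ fromEdgeSet {s(u, v)} with hK'
  have hacy : K'.IsAcyclic := acyclic_add_cross K.2.2 hr
  have hle : F ≤ K' := le_trans K.2.1 le_sup_left
  have huvK : s(u, v) ∉ K.1.edgeSet := by
    intro hh
    exact hr ((K.1.mem_edgeSet.mp hh).reachable)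
  have hcard : K.1.edgeSet.ncard < K'.edgeSet.ncard := by
    rw [hK', edgeSet_sup, edgeSet_fromEdgeSet_singleton hne2, Set.union_singleton,
      Set.ncard_insert_of_notMem huvK (Set.toFinite _)]
    omega
  exact absurd (hK ⟨K', hle, hacy⟩) (not_le.mpr hcard)

lemma forest_ncard_le [Fintype V] {F : SimpleGraph V} (hF : F.IsAcyclic) :
    F.edgeSet.ncard ≤ Fintype.card V - 1 := by
  classical
  cases isEmpty_or_nonempty V with
  | inl h =>
    have he : IsEmpty (Sym2 V) := ⟨fun e => Sym2.ind (fun x _ => (h.false x).elim) e⟩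
    rw [Set.eq_empty_of_isEmpty F.edgeSet, Set.ncard_empty]
    omega
  | inr h =>
    obtain ⟨K, hle, hacy, hconn⟩ := exists_max_forest hF
    have htree : K.IsTree := ⟨hconn, hacy⟩
    have hcard := htree.card_edgeFinset
    have h1 : F.edgeSet.ncard ≤ K.edgeSet.ncard :=
      Set.ncard_le_ncard (edgeSet_mono hle) (Set.toFinite _)
    have h2 : K.edgeSet.ncard = K.edgeFinset.card := by
      rw [Set.ncard_eq_toFinset_card']
      congr 1
    omega

lemma forest_connected_of_card [Fintype V] [Nonempty V] {F : SimpleGraph V}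
    (hF : F.IsAcyclic) (hc : Fintype.card V - 1 ≤ F.edgeSet.ncard) : F.Connected := by
  classical
  obtain ⟨K, hle, hacy, hconn⟩ := exists_max_forest hF
  have htree : K.IsTree := ⟨hconn, hacy⟩
  have hcard := htree.card_edgeFinset
  have h2 : K.edgeSet.ncard = K.edgeFinset.card := by
    rw [Set.ncard_eq_toFinset_card']
    congr 1
  have heq : F.edgeSet = K.edgeSet :=
    Set.eq_of_subset_of_ncard_le (edgeSet_mono hle) (by omega) (Set.toFinite _)
  rw [edgeSet_inj] at heq
  rw [heq]
  exact hconn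

lemma ncard_biUnion_le {α ι : Type*} [Finite α] (s : Finset ι) (f : ι → Set α) :
    (⋃ i ∈ s, f i).ncard ≤ ∑ i ∈ s, (f i).ncard := by
  classical
  induction s using Finset.induction_on with
  | empty => simp
  | insert a t hni ih =>
    rw [Finset.set_biUnion_insert, Finset.sum_insert hni]
    exact le_trans (Set.ncard_union_le _ _) (by omega)

/-- Membership of supports of walks with exchangeable edges, in the reachable part. -/
lemma support_subset_reach {H : SimpleGraph V} {S : Set (Sym2 V)} {x₀ c d : V}
    (w : H.Walk c d) (hedges : ∀ g ∈ w.edges, g ∈ S)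
    (hc : (fromEdgeSet S).Reachable x₀ c) :
    ∀ x ∈ w.support, (fromEdgeSet S).Reachable x₀ x := by
  induction w with
  | nil =>
    intro x hx
    rw [Walk.support_nil, List.mem_singleton] at hx
    exact hx ▸ hc
  | @cons a b y h q ih =>
    intro x hx
    have hab : (fromEdgeSet S).Adj a b := by
      rw [fromEdgeSet_adj]
      exact ⟨hedges _ (by simp), h.ne⟩
    rw [Walk.support_cons, List.mem_cons] at hx
    rcases hx with rfl | h1
    · exact hc
    · exact ih (fun g hg => hedges _ (by simp [hg])) (hc.trans hab.reachable) x h1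

/-- Walk surgery preserving supports. -/
lemma walk_surgery_support {H H' : SimpleGraph V} {S : Set V}
    (hrepl : ∀ c d, H.Adj c d → c ∈ S → ∃ w : H'.Walk c d, ∀ x ∈ w.support, x ∈ S)
    {x y : V} (w : H.Walk x y) (hx : x ∈ S) :
    ∃ w' : H'.Walk x y, ∀ z ∈ w'.support, z ∈ S := by
  induction w with
  | nil => exact ⟨Walk.nil, by simpa using hx⟩
  | @cons a b y h q ih =>
    obtain ⟨w1, hw1⟩ := hrepl _ _ h hx
    obtain ⟨w2, hw2⟩ := ih (hw1 _ (Walk.end_mem_support w1))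
    refine ⟨w1.append w2, fun z hz => ?_⟩
    rcases (Walk.mem_support_append_iff _ _).mp hz with h1 | h1
    · exact hw1 _ h1
    · exact hw2 _ h1

/-- Connectivity of each forest inside the reachable part `U`. -/
lemma connect_in_U {F₀ : Fin m → SimpleGraph V} (hA : Adm G F₀)
    (hmax : ∀ F'' : Fin m → SimpleGraph V, Adm G F'' → wgt F'' ≤ wgt F₀) (x₀ : V)
    (i : Fin m) {a b : V}
    (ha : (fromEdgeSet (DD G F₀)).Reachable x₀ a)
    (hb : (fromEdgeSet (DD G F₀)).Reachable x₀ b) :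
    ∃ w : (F₀ i).Walk a b, ∀ x ∈ w.support, (fromEdgeSet (DD G F₀)).Reachable x₀ x := by
  classical
  obtain ⟨wD⟩ := ha.symm.trans hb
  refine walk_surgery_support (S := {x | (fromEdgeSet (DD G F₀)).Reachable x₀ x})
    ?_ wD ha
  intro c d hcd hc
  have hmemD : s(c, d) ∈ DD G F₀ := by
    rw [fromEdgeSet_adj] at hcd
    exact hcd.1
  have hr : (F₀ i).Reachable c d := by
    obtain ⟨hcdG, F'', hR'', hb''⟩ := hmemD
    have hmax'' : ∀ F3 : Fin m → SimpleGraph V, Adm G F3 → wgt F3 ≤ wgt F'' := by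
      intro F3 h3
      rw [(reach_props hA hR'').2.1]
      exact hmax F3 h3
    have h1 := max_reach_aux (reach_props hA hR'').1 hmax'' hcdG hb'' i
    rwa [(reach_props hA hR'').2.2 i c d] at h1
  obtain ⟨w0⟩ := hr
  have hedges : ∀ g ∈ w0.bypass.edges, g ∈ DD G F₀ :=
    claimC hA hmax hmemD Relation.ReflTransGen.refl i w0.bypass w0.bypass_isPath
  exact ⟨w0.bypass, support_subset_reach w0.bypass hedges hc⟩

end Family

section Assemble

/-- Lift a walk staying in `S` to the induced graph on `S`. -/
lemma reachable_comap {H : SimpleGraph V} {S : Set V} {a b : V}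
    (w : H.Walk a b) (hS : ∀ x ∈ w.support, x ∈ S) (ha : a ∈ S) (hb : b ∈ S) :
    (SimpleGraph.comap (Subtype.val : S → V) H).Reachable ⟨a, ha⟩ ⟨b, hb⟩ := by
  induction w with
  | nil => exact Reachable.refl _
  | @cons a c y h q ih =>
    have hc : c ∈ S := hS _ (by simp)
    have hadj : (SimpleGraph.comap (Subtype.val : S → V) H).Adj ⟨a, ha⟩ ⟨c, hc⟩ := h
    exact hadj.reachable.trans (ih (fun x hx => hS _ (by simp [hx])) hc hb)

lemma assemble [Finite V] {G : SimpleGraph V} {m : ℕ} (t : Fin m → SimpleGraph V)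
    (hle : ∀ i, t i ≤ G) (hac : ∀ i, (t i).IsAcyclic)
    (hdisj : ∀ i j, i ≠ j → Disjoint (t i).edgeSet (t j).edgeSet)
    (U : Set V) {x₀ y₀ : V} (hx : x₀ ∈ U) (hy : y₀ ∈ U) (hxy : x₀ ≠ y₀)
    (hconn : ∀ (i : Fin m), ∀ a ∈ U, ∀ b ∈ U,
      ∃ w : (t i).Walk a b, ∀ x ∈ w.support, x ∈ U) :
    ∃ H : G.Subgraph, 2 ≤ H.verts.ncard ∧ IsTreeConn m H.coe := by
  classical
  refine ⟨{ verts := U,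
            Adj := fun a b => (∃ i, (t i).Adj a b) ∧ a ∈ U ∧ b ∈ U,
            adj_sub := by rintro v w ⟨⟨i, hi⟩, -, -⟩; exact hle i hi,
            edge_vert := by rintro v w ⟨-, hv, -⟩; exact hv,
            symm := ⟨by rintro v w ⟨⟨i, hi⟩, hv, hw⟩; exact ⟨⟨i, hi.symm⟩, hw, hv⟩⟩ }, ?_, ?_⟩
  · exact (Set.one_lt_ncard (Set.toFinite U)).mpr ⟨x₀, hx, y₀, hy, hxy⟩
  · refine ⟨fun i => SimpleGraph.comap (Subtype.val : U → V) (t i), ?_, ?_, ?_⟩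
    · intro i a b hab
      exact ⟨⟨i, hab⟩, a.2, b.2⟩
    · intro i
      constructor
      · rw [connected_iff]
        refine ⟨fun a b => ?_, ⟨⟨x₀, hx⟩⟩⟩
        obtain ⟨w, hw⟩ := hconn i a a.2 b b.2
        have := reachable_comap w hw a.2 b.2
        simpa using this
      · intro a c hc
        have hinj : Function.Injective (Subtype.val : U → V) := Subtype.val_injective
        have h2 := (Walk.map_isCycle_iff_of_injective (p := c)
          (f := (SimpleGraph.Embedding.comap (⟨Subtype.val, hinj⟩ : U ↪ V) (t i)).toHom)
          (by exact hinj)).mpr hc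
        exact hac i _ h2
    · intro i j hij
      rw [Set.disjoint_left]
      intro e he hj
      induction e using Sym2.inductionOn with
      | hf a b =>
        have h1 : (t i).Adj a b := he
        have h2 : (t j).Adj a b := hj
        exact (hdisj i j hij).le_bot ⟨((t i).mem_edgeSet).mpr h1, ((t j).mem_edgeSet).mpr h2⟩

end Assemble

end TCaux

theorem stmt7 {V : Type*} [Fintype V] (m : ℕ) (hm : 0 < m) (G : SimpleGraph V)
    (hV : 2 ≤ Fintype.card V)
    (hE : m * (Fintype.card V - 1) ≤ G.edgeSet.ncard) :
    ∃ H : G.Subgraph, 2 ≤ H.verts.ncard ∧ IsTreeConn m H.coe := by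
  classical
  obtain ⟨F₀, hA, hmax⟩ := TCaux.exists_max_adm (m := m) G
  by_cases hcov : ∃ e ∈ G.edgeSet, e ∉ TCaux.bigE F₀
  · obtain ⟨e, heG, hbf⟩ := hcov
    obtain ⟨x₀, y₀, rfl⟩ : ∃ a b, e = s(a, b) := Sym2.inductionOn e (fun x y => ⟨x, y, rfl⟩)
    have hxy : x₀ ≠ y₀ := ((G.mem_edgeSet).mp heG).ne
    have heD : s(x₀, y₀) ∈ TCaux.DD G F₀ := ⟨heG, F₀, Relation.ReflTransGen.refl, hbf⟩
    set U : Set V := {x | (SimpleGraph.fromEdgeSet (TCaux.DD G F₀)).Reachable x₀ x} with hU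
    have hx : x₀ ∈ U := Reachable.refl x₀
    have hy : y₀ ∈ U := by
      have hadj : (fromEdgeSet (TCaux.DD G F₀)).Adj x₀ y₀ := by
        rw [fromEdgeSet_adj]
        exact ⟨heD, hxy⟩
      exact hadj.reachable
    refine TCaux.assemble F₀ hA.1 hA.2.1 hA.2.2 U hx hy hxy ?_
    intro i a ha b hb
    exact TCaux.connect_in_U hA hmax x₀ i ha hb
  · push_neg at hcov
    have hsub : G.edgeSet ⊆ TCaux.bigE F₀ := hcov
    have h1 : m * (Fintype.card V - 1) ≤ TCaux.wgt F₀ := by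
      refine le_trans hE (le_trans (Set.ncard_le_ncard hsub (Set.toFinite _)) ?_)
      have hbe : TCaux.bigE F₀ = ⋃ i ∈ (Finset.univ : Finset (Fin m)), (F₀ i).edgeSet := by
        simp [TCaux.bigE]
      rw [hbe]
      exact TCaux.ncard_biUnion_le _ _
    have hub : ∀ i, (F₀ i).edgeSet.ncard ≤ Fintype.card V - 1 :=
      fun i => TCaux.forest_ncard_le (hA.2.1 i)
    have hlb : ∀ i, Fintype.card V - 1 ≤ (F₀ i).edgeSet.ncard := by
      by_contra hcon
      push_neg at hcon
      obtain ⟨i₀, hi₀⟩ := hcon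
      have hlt : TCaux.wgt F₀ < m * (Fintype.card V - 1) := by
        unfold TCaux.wgt
        calc ∑ i, (F₀ i).edgeSet.ncard
            < ∑ _i : Fin m, (Fintype.card V - 1) :=
              Finset.sum_lt_sum (fun i _ => hub i) ⟨i₀, Finset.mem_univ _, hi₀⟩
          _ = m * (Fintype.card V - 1) := by
              simp [Finset.sum_const, mul_comm]
      omega
    have hnev : Nonempty V := by
      rw [← Fintype.card_pos_iff]
      omega
    have hconn : ∀ i, (F₀ i).Connected := fun i =>
      TCaux.forest_connected_of_card (hA.2.1 i) (hlb i)
    obtain ⟨x₀, y₀, hxy⟩ := Fintype.exists_pair_of_one_lt_card (α := V) (by omega)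
    refine TCaux.assemble F₀ hA.1 hA.2.1 hA.2.2 Set.univ
      (Set.mem_univ x₀) (Set.mem_univ y₀) hxy ?_
    intro i a _ b _
    obtain ⟨w⟩ := (hconn i).preconnected a b
    exact ⟨w, fun x _ => Set.mem_univ x⟩
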